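/- For every n ≥ 1 and every integer k with 0 ≤ k ≤ n, define g_n(k) = -log( C(n,k) (k/n)^k ((n-k)/n)^{n-k} ), with the convention 0 log 0 = 0. Then g_n(k) ≤ g(k), where g(k) = log(k!) - k log(k) + k. -/

import Mathlib

/-- `g k = log(k! / (k^k e^{-k}))`. -/
noncomputable def g (k : ℕ) : ℝ :=
  Real.log (Nat.factorial k) - k * Real.log k + k

/-- `gBin n k = - log( C(n,k) (k/n)^k ((n-k)/n)^{n-k} )`, minus the log of the
probability that a `Binomial(n, k/n)` random variable equals `k`
(conventions `0^0 = 1`, `0 log 0 = 0`). -/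
noncomputable def gBin (n k : ℕ) : ℝ :=
  - Real.log ((n.choose k : ℝ) * ((k : ℝ) / n) ^ k * (((n - k : ℕ) : ℝ) / n) ^ (n - k))

lemma g_zero : g 0 = 0 := by simp [g]

lemma g_mono : Monotone g := by
  apply monotone_nat_of_le_succ
  intro m
  rcases Nat.eq_zero_or_pos m with h | h
  · subst h; simp [g, Nat.factorial]
  · have hm : (0:ℝ) < m := by exact_mod_cast h
    have hm1 : (0:ℝ) < (m:ℝ) + 1 := by positivity
    have hlog : Real.log (((m:ℝ)+1)/m) ≤ ((m:ℝ)+1)/m - 1 :=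
      Real.log_le_sub_one_of_pos (by positivity)
    have h1 : Real.log (((m:ℝ)+1)/m) = Real.log ((m:ℝ)+1) - Real.log m :=
      Real.log_div (by positivity) (ne_of_gt hm)
    have h2 : ((m:ℝ)+1)/m - 1 = 1/m := by field_simp; ring
    have hfac : (0:ℝ) < (Nat.factorial m : ℝ) := by
      exact_mod_cast m.factorial_pos
    simp only [g, Nat.factorial_succ, Nat.cast_mul, Nat.cast_succ]
    rw [Real.log_mul (by positivity) (ne_of_gt hfac)]
    have key : (m:ℝ) * (Real.log ((m:ℝ)+1) - Real.log m) ≤ 1 := by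
      have := mul_le_mul_of_nonneg_left (h1 ▸ h2 ▸ hlog) (le_of_lt hm)
      rw [mul_one_div, div_self (ne_of_gt hm)] at this
      linarith
    nlinarith [key]

/-- `g_n(k) ≤ g(k)` for all `1 ≤ n` and `0 ≤ k ≤ n`. -/
theorem gBin_le_g : ∀ n k : ℕ, 1 ≤ n → k ≤ n → gBin n k ≤ g k := by
  intro n k hn hk
  have hn0 : (0:ℝ) < n := by exact_mod_cast hn
  rcases Nat.eq_zero_or_pos k with hk0 | hkpos
  · subst hk0
    simp [gBin, g, div_self (ne_of_gt hn0)]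
  rcases eq_or_lt_of_le hk with hkn | hkn
  · subst hkn
    have : gBin k k = 0 := by
      simp [gBin, div_self (ne_of_gt hn0)]
    rw [this, ← g_zero]
    exact g_mono (Nat.zero_le k)
  -- 0 < k < n
  have hb : 0 < n - k := Nat.sub_pos_of_lt hkn
  have hk0 : (0:ℝ) < k := by exact_mod_cast hkpos
  have hb0 : (0:ℝ) < ((n - k : ℕ) : ℝ) := by exact_mod_cast hb
  have hkf : (0:ℝ) < (Nat.factorial k : ℝ) := by exact_mod_cast k.factorial_pos
  have hbf : (0:ℝ) < (Nat.factorial (n - k) : ℝ) := by exact_mod_cast (n-k).factorial_pos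
  have hnf : (0:ℝ) < (Nat.factorial n : ℝ) := by exact_mod_cast n.factorial_pos
  have hchoose : (n.choose k : ℝ) = (Nat.factorial n : ℝ) / ((Nat.factorial k : ℝ) * (Nat.factorial (n-k) : ℝ)) := by
    rw [eq_div_iff (by positivity), ← mul_assoc]
    exact_mod_cast Nat.choose_mul_factorial_mul_factorial hk
  have hcast : ((n - k : ℕ) : ℝ) = (n : ℝ) - k := by
    push_cast [Nat.cast_sub hk]; ring
  have heq : gBin n k = g k + g (n - k) - g n := by
    unfold gBin g
    rw [hchoose,
      Real.log_mul (by positivity) (by positivity),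
      Real.log_mul (by positivity) (by positivity),
      Real.log_div (by positivity) (by positivity),
      Real.log_mul (by positivity) (by positivity),
      Real.log_pow, Real.log_pow,
      Real.log_div (by positivity) (by positivity),
      Real.log_div (by positivity) (by positivity)]
    have hsum : ((n - k : ℕ) : ℝ) * Real.log n + (k : ℝ) * Real.log n = (n : ℝ) * Real.log n := by
      rw [hcast]; ring
    nlinarith [hsum]
  rw [heq]
  have := g_mono (Nat.sub_le n k)
  linarith
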